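/- Let M be an immersed semiumbilical surface in ℝ⁴, and let (t₁,t₂) be a local orthonormal frame of TM satisfying α(t₁,t₂) = 0. Set B = ½(α(t₁,t₁) − α(t₂,t₂)) and H = ½(α(t₁,t₁) + α(t₂,t₂)), and let J be a fibrewise linear map of NM with J(N_pM) = N_pM, J² = −id, ⟨Ju, u⟩ = 0 and ⟨Ju, Ju⟩ = ⟨u, u⟩ for all u ∈ NM. Then ⟨H, JB⟩ is nowhere zero, so the normal section c = JB/⟨H, JB⟩ is well defined, and c satisfies c·α = g, i.e. ⟨c, α(X,Y)⟩ = ⟨X,Y⟩ for all tangent fields X,Y. -/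

import Mathlib

/- Local framework: an immersed surface in ℝⁿ is given by a smooth parametrization
`ψ : Pl → Amb n` (`Pl = ℝ²` the parameter domain) whose differential is everywhere
injective.  Tangent/normal spaces, fundamental forms, connections, curvature ellipse,
(semi)umbilic and inflection points, flatness, etc. are defined from `ψ`. -/

noncomputable section
open scoped RealInnerProductSpace

/-- The parameter plane ℝ². -/
abbrev Pl := EuclideanSpace ℝ (Fin 2)
/-- Ambient Euclidean space ℝⁿ. -/
abbrev Amb (n : ℕ) := EuclideanSpace ℝ (Fin n)

/-- `ψ` is a smooth immersion. -/
def Immersion {n : ℕ} (ψ : Pl → Amb n) : Prop :=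
  ContDiff ℝ (⊤ : ℕ∞) ψ ∧ ∀ q, Function.Injective (fderiv ℝ ψ q)

/-- Tangent plane `T_pM` (as a linear subspace of the ambient space) at the point
with parameter `q`. -/
def Tang {n : ℕ} (ψ : Pl → Amb n) (q : Pl) : Submodule ℝ (Amb n) :=
  LinearMap.range (fderiv ℝ ψ q : Pl →ₗ[ℝ] Amb n)

/-- Normal space `N_pM = (T_pM)ᗮ`. -/
def Nor {n : ℕ} (ψ : Pl → Amb n) (q : Pl) : Submodule ℝ (Amb n) :=
  (Tang ψ q)ᗮ

/-- Tangential part `X ↦ X^⊤` of an ambient vector. -/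
def tproj {n : ℕ} (ψ : Pl → Amb n) (q : Pl) (x : Amb n) : Amb n :=
  ((Tang ψ q).orthogonalProjectionOnto x : Amb n)

/-- Normal part `X ↦ X^⊥` of an ambient vector. -/
def nproj {n : ℕ} (ψ : Pl → Amb n) (q : Pl) (x : Amb n) : Amb n :=
  x - tproj ψ q x

/-- The second fundamental form `α` at the point of parameter `q`, evaluated on the
tangent vectors `dψ_q v`, `dψ_q w` (for parameter directions `v w : Pl`):
`α(dψ v, dψ w) = (D_{dψ v} (dψ w))^⊥ = (∂_v ∂_w ψ)^⊥`. -/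
def sff {n : ℕ} (ψ : Pl → Amb n) (q : Pl) (v w : Pl) : Amb n :=
  nproj ψ q (fderiv ℝ (fun x => fderiv ℝ ψ x w) q v)

/-- The curvature ellipse at `q`: image of `η(t) = α(t,t)` over the unit tangent
vectors `t = dψ_q v`. -/
def Ellipse {n : ℕ} (ψ : Pl → Amb n) (q : Pl) : Set (Amb n) :=
  {z | ∃ v : Pl, ‖fderiv ℝ ψ q v‖ = 1 ∧ z = sff ψ q v v}

/-- `q` is an umbilic point: the curvature ellipse degenerates to a point. -/
def Umbilic {n : ℕ} (ψ : Pl → Amb n) (q : Pl) : Prop :=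
  ∃ a : Amb n, Ellipse ψ q = {a}

/-- `q` is a semiumbilic point: the curvature ellipse lies in an affine line. -/
def Semiumbilic {n : ℕ} (ψ : Pl → Amb n) (q : Pl) : Prop :=
  ∃ a b : Amb n, Ellipse ψ q ⊆ {x | ∃ s : ℝ, x = a + s • b}

/-- `q` is a point of inflection: the curvature ellipse lies in a line through the
origin of the normal space. -/
def Inflection {n : ℕ} (ψ : Pl → Amb n) (q : Pl) : Prop :=
  ∃ b : Amb n, Ellipse ψ q ⊆ {x | ∃ s : ℝ, x = s • b}

/-- The surface is semiumbilical: every point is semiumbilic and not of inflection. -/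
def Semiumbilical {n : ℕ} (ψ : Pl → Amb n) : Prop :=
  ∀ q, Semiumbilic ψ q ∧ ¬ Inflection ψ q

/-- A smooth ambient-valued field which is everywhere tangent. -/
def TangentField {n : ℕ} (ψ : Pl → Amb n) (F : Pl → Amb n) : Prop :=
  ContDiff ℝ (⊤ : ℕ∞) F ∧ ∀ q, F q ∈ Tang ψ q

/-- A smooth ambient-valued field which is everywhere normal (a section of `NM`). -/
def NormalField {n : ℕ} (ψ : Pl → Amb n) (F : Pl → Amb n) : Prop :=
  ContDiff ℝ (⊤ : ℕ∞) F ∧ ∀ q, F q ∈ Nor ψ q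

/-- The tangent covariant derivative `∇^⊤ F = (D F)^⊤` of an ambient field `F`
along the `i`-th coordinate direction of the parameter plane. -/
def covT {n : ℕ} (ψ : Pl → Amb n) (F : Pl → Amb n) (i : Fin 2) (q : Pl) : Amb n :=
  tproj ψ q (fderiv ℝ F q (EuclideanSpace.single i (1:ℝ)))

/-- The tangent connection `∇^⊤` is flat: its curvature `R(∂₁,∂₂)` annihilates every
smooth tangent field (by tensoriality of the curvature this means `R = 0`, since the
coordinate fields `∂₁, ∂₂` commute and span). -/
def FlatSurface {n : ℕ} (ψ : Pl → Amb n) : Prop :=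
  ∀ F : Pl → Amb n, TangentField ψ F →
    ∀ q, covT ψ (covT ψ F 1) 0 q = covT ψ (covT ψ F 0) 1 q

/-- A tangent field is parallel: `∇^⊤ Y = (D Y)^⊤ = 0` in every tangent direction. -/
def ParallelT {n : ℕ} (ψ : Pl → Amb n) (F : Pl → Amb n) : Prop :=
  ∀ q (v : Pl), tproj ψ q (fderiv ℝ F q v) = 0

/-- A normal section is parallel: `∇^⊥ u = (D u)^⊥ = 0` in every tangent direction. -/
def ParallelN {n : ℕ} (ψ : Pl → Amb n) (F : Pl → Amb n) : Prop :=
  ∀ q (v : Pl), nproj ψ q (fderiv ℝ F q v) = 0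

/-- `c · α = g`: the normal section `c` satisfies `⟨c, α(X,Y)⟩ = ⟨X,Y⟩` for all
tangent vectors `X = dψ v`, `Y = dψ w`. -/
def CAG {n : ℕ} (ψ : Pl → Amb n) (c : Pl → Amb n) : Prop :=
  ∀ q (v w : Pl), (⟪c q, sff ψ q v w⟫) = ⟪fderiv ℝ ψ q v, fderiv ℝ ψ q w⟫

/-- `e` is a tangent field with `∇^⊤_X e = X` for every tangent vector `X = dψ v`. -/
def EulerField {n : ℕ} (ψ : Pl → Amb n) (e : Pl → Amb n) : Prop :=
  TangentField ψ e ∧ ∀ q (v : Pl), tproj ψ q (fderiv ℝ e q v) = fderiv ℝ ψ q v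

/-- `j` is the tangent field `½ grad⟨c,c⟩` (gradient with respect to the first
fundamental form): `⟨2 j, dψ v⟩ = d⟨c,c⟩(dψ v)` for every direction `v`. -/
def HalfGradCSq {n : ℕ} (ψ : Pl → Amb n) (c j : Pl → Amb n) : Prop :=
  TangentField ψ j ∧
    ∀ q (v : Pl), 2 * (⟪j q, fderiv ℝ ψ q v⟫) = fderiv ℝ (fun x => (⟪c x, c x⟫ : ℝ)) q v

/-- `k` is a normal section with `(D_X (e - k))^⊥ = 0` for all tangent `X`. -/
def KField {n : ℕ} (ψ : Pl → Amb n) (e k : Pl → Amb n) : Prop :=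
  NormalField ψ k ∧ ∀ q (v : Pl), nproj ψ q (fderiv ℝ (fun x => e x - k x) q v) = 0

/-- `dψ_q v` is a (unit) asymptotic direction at `q`: `η(t) = α(t,t)` is an endpoint
(extreme point) of the segment into which the curvature ellipse degenerates. -/
def IsAsymptotic {n : ℕ} (ψ : Pl → Amb n) (q : Pl) (v : Pl) : Prop :=
  ‖fderiv ℝ ψ q v‖ = 1 ∧ sff ψ q v v ∈ Set.extremePoints ℝ (Ellipse ψ q)

section AuxLemmas
open scoped RealInnerProductSpace
variable {n : ℕ}

lemma nproj_mem (ψ : Pl → Amb n) (q : Pl) (x : Amb n) : nproj ψ q x ∈ Nor ψ q :=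
  Submodule.sub_starProjection_mem_orthogonal x

lemma sff_mem (ψ : Pl → Amb n) (q v w : Pl) : sff ψ q v w ∈ Nor ψ q :=
  nproj_mem ψ q _

lemma nproj_linear (ψ : Pl → Amb n) (q : Pl) (a b : ℝ) (x y : Amb n) :
    nproj ψ q (a • x + b • y) = a • nproj ψ q x + b • nproj ψ q y := by
  simp only [nproj, tproj, map_add, map_smul, Submodule.coe_add, Submodule.coe_smul]
  module

lemma fderiv2_eq (ψ : Pl → Amb n) (hψ : ContDiff ℝ (⊤ : ℕ∞) ψ) (q v w : Pl) :
    fderiv ℝ (fun x => fderiv ℝ ψ x w) q v = fderiv ℝ (fderiv ℝ ψ) q v w := by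
  have hd : DifferentiableAt ℝ (fderiv ℝ ψ) q :=
    ((contDiff_infty_iff_fderiv.mp hψ).2.differentiable (by norm_num) q)
  rw [fderiv_clm_apply hd (differentiableAt_const w)]
  simp

lemma sff_symm (ψ : Pl → Amb n) (hψ : ContDiff ℝ (⊤ : ℕ∞) ψ) (q v w : Pl) :
    sff ψ q v w = sff ψ q w v := by
  have hd : DifferentiableAt ℝ (fderiv ℝ ψ) q :=
    ((contDiff_infty_iff_fderiv.mp hψ).2.differentiable (by norm_num) q)
  unfold sff
  rw [fderiv2_eq ψ hψ, fderiv2_eq ψ hψ,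
    second_derivative_symmetric (fun y => ((hψ.differentiable (by simp)) y).hasFDerivAt)
      hd.hasFDerivAt v w]

lemma sff_left (ψ : Pl → Amb n) (q : Pl) (a b : ℝ) (v v' w : Pl) :
    sff ψ q (a • v + b • v') w = a • sff ψ q v w + b • sff ψ q v' w := by
  unfold sff
  rw [map_add, map_smul, map_smul, nproj_linear]

lemma sff_right (ψ : Pl → Amb n) (hψ : ContDiff ℝ (⊤ : ℕ∞) ψ) (q : Pl) (a b : ℝ) (v w w' : Pl) :
    sff ψ q v (a • w + b • w') = a • sff ψ q v w + b • sff ψ q v w' := by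
  rw [sff_symm ψ hψ, sff_left, sff_symm ψ hψ q v w, sff_symm ψ hψ q v w']

end AuxLemmas
section AuxLemmas2
open scoped RealInnerProductSpace
variable {n : ℕ}

lemma exists_decomp (ψ : Pl → Amb n) (q : Pl) (hinj : Function.Injective (fderiv ℝ ψ q))
    (t₁ t₂ : Pl) (h1 : ‖fderiv ℝ ψ q t₁‖ = 1) (h2 : ‖fderiv ℝ ψ q t₂‖ = 1)
    (h12 : ⟪fderiv ℝ ψ q t₁, fderiv ℝ ψ q t₂⟫ = 0) (v : Pl) :
    ∃ a b : ℝ, a • t₁ + b • t₂ = v := by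
  have hz : ∀ i, ![fderiv ℝ ψ q t₁, fderiv ℝ ψ q t₂] i ≠ 0 := by
    intro i
    fin_cases i <;> simp <;> [skip; skip] <;>
      first
      | (intro h; rw [h] at h1; simp at h1)
      | (intro h; rw [h] at h2; simp at h2)
  have hli : LinearIndependent ℝ ![fderiv ℝ ψ q t₁, fderiv ℝ ψ q t₂] := by
    apply linearIndependent_of_ne_zero_of_inner_eq_zero hz
    intro i j hij
    fin_cases i <;> fin_cases j <;>
      simp_all [real_inner_comm (fderiv ℝ ψ q t₁) (fderiv ℝ ψ q t₂)]
  have hli2 : LinearIndependent ℝ ![t₁, t₂] := by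
    apply LinearIndependent.of_comp ((fderiv ℝ ψ q : Pl →L[ℝ] Amb n) : Pl →ₗ[ℝ] Amb n)
    convert hli using 1
    · funext i
      fin_cases i <;> rfl
    · rfl
  have hsp : Submodule.span ℝ (Set.range ![t₁, t₂]) = ⊤ := by
    apply Submodule.eq_top_of_finrank_eq
    rw [finrank_span_eq_card hli2]
    simp
  have hv : v ∈ Submodule.span ℝ ({t₁, t₂} : Set Pl) := by
    have hr : Set.range ![t₁, t₂] = {t₁, t₂} := by
      ext x; simp [Fin.exists_fin_two]; tauto
    rw [← hr, hsp]; trivial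
  exact Submodule.mem_span_pair.mp hv

lemma finrank_nor (ψ : Pl → Amb 4) (q : Pl) (hinj : Function.Injective (fderiv ℝ ψ q)) :
    Module.finrank ℝ (Nor ψ q) = 2 := by
  have h1 : Module.finrank ℝ (Tang ψ q) = 2 := by
    rw [Tang,
      show (LinearMap.range (fderiv ℝ ψ q : Pl →ₗ[ℝ] Amb 4) : Submodule ℝ (Amb 4))
          = LinearMap.range ((fderiv ℝ ψ q : Pl →L[ℝ] Amb 4) : Pl →ₗ[ℝ] Amb 4) from rfl,
      LinearMap.finrank_range_of_inj hinj]
    simp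
  apply Submodule.finrank_add_finrank_orthogonal' (K := Tang ψ q)
  rw [h1]
  simp

end AuxLemmas2

/-- For a semiumbilical surface in ℝ⁴ with an orthonormal frame `(t₁,t₂)`
with `α(t₁,t₂) = 0`, setting `B = ½(α(t₁,t₁) - α(t₂,t₂))`, `H = ½(α(t₁,t₁) + α(t₂,t₂))`
and `J` a fibrewise complex structure of the normal bundle, `⟨H, JB⟩` is nowhere zero
and `c = JB/⟨H,JB⟩` satisfies `c·α = g`. -/
theorem statement_2 (ψ : Pl → Amb 4) (hψ : Immersion ψ) (hsem : Semiumbilical ψ)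
    (T₁ T₂ : Pl → Pl)
    (hT₁ : ∀ q, ‖fderiv ℝ ψ q (T₁ q)‖ = 1) (hT₂ : ∀ q, ‖fderiv ℝ ψ q (T₂ q)‖ = 1)
    (hT₁₂ : ∀ q, ⟪fderiv ℝ ψ q (T₁ q), fderiv ℝ ψ q (T₂ q)⟫ = 0)
    (hb₃ : ∀ q, sff ψ q (T₁ q) (T₂ q) = 0)
    (J : Pl → (Amb 4 →ₗ[ℝ] Amb 4))
    (hJmem : ∀ q, ∀ u ∈ Nor ψ q, J q u ∈ Nor ψ q)
    (hJsq : ∀ q, ∀ u ∈ Nor ψ q, J q (J q u) = -u)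
    (hJorth : ∀ q, ∀ u ∈ Nor ψ q, ⟪J q u, u⟫ = 0)
    (hJiso : ∀ q, ∀ u ∈ Nor ψ q, (⟪J q u, J q u⟫ : ℝ) = ⟪u, u⟫)
    (B H : Pl → Amb 4)
    (hB : ∀ q, B q = (1/2 : ℝ) • (sff ψ q (T₁ q) (T₁ q) - sff ψ q (T₂ q) (T₂ q)))
    (hH : ∀ q, H q = (1/2 : ℝ) • (sff ψ q (T₁ q) (T₁ q) + sff ψ q (T₂ q) (T₂ q))) :
    (∀ q, (⟪H q, J q (B q)⟫ : ℝ) ≠ 0) ∧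
    ∀ q (v w : Pl),
      ⟪((⟪H q, J q (B q)⟫ : ℝ))⁻¹ • J q (B q), sff ψ q v w⟫
        = ⟪fderiv ℝ ψ q v, fderiv ℝ ψ q w⟫ := by
  obtain ⟨hsm, hinj⟩ := hψ
  have hi11 : ∀ q, (⟪fderiv ℝ ψ q (T₁ q), fderiv ℝ ψ q (T₁ q)⟫ : ℝ) = 1 := fun q => by
    rw [real_inner_self_eq_norm_mul_norm, hT₁ q]; norm_num
  have hi22 : ∀ q, (⟪fderiv ℝ ψ q (T₂ q), fderiv ℝ ψ q (T₂ q)⟫ : ℝ) = 1 := fun q => by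
    rw [real_inner_self_eq_norm_mul_norm, hT₂ q]; norm_num
  have hi21 : ∀ q, (⟪fderiv ℝ ψ q (T₂ q), fderiv ℝ ψ q (T₁ q)⟫ : ℝ) = 0 := fun q => by
    rw [real_inner_comm]; exact hT₁₂ q
  have hdec : ∀ q v, ∃ a b : ℝ, a • T₁ q + b • T₂ q = v := fun q v =>
    exists_decomp ψ q (hinj q) _ _ (hT₁ q) (hT₂ q) (hT₁₂ q) v
  have hb₃' : ∀ q, sff ψ q (T₂ q) (T₁ q) = 0 := fun q => by
    rw [sff_symm ψ hsm]; exact hb₃ q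
  have hexp : ∀ q (a₁ a₂ b₁ b₂ : ℝ),
      sff ψ q (a₁ • T₁ q + a₂ • T₂ q) (b₁ • T₁ q + b₂ • T₂ q)
        = (a₁*b₁) • sff ψ q (T₁ q) (T₁ q) + (a₂*b₂) • sff ψ q (T₂ q) (T₂ q) := by
    intro q a₁ a₂ b₁ b₂
    rw [sff_left, sff_right ψ hsm, sff_right ψ hsm, hb₃ q, hb₃' q]
    module
  have hgexp : ∀ q (a₁ a₂ b₁ b₂ : ℝ),
      (⟪fderiv ℝ ψ q (a₁ • T₁ q + a₂ • T₂ q), fderiv ℝ ψ q (b₁ • T₁ q + b₂ • T₂ q)⟫ : ℝ)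
        = a₁*b₁ + a₂*b₂ := by
    intro q a₁ a₂ b₁ b₂
    rw [map_add, map_smul, map_smul, map_add, map_smul, map_smul]
    simp only [inner_add_left, inner_add_right, real_inner_smul_left, real_inner_smul_right,
      hi11 q, hi22 q, hi21 q, hT₁₂ q]
    ring
  have hs1 : ∀ q, sff ψ q (T₁ q) (T₁ q) = H q + B q := fun q => by
    rw [hB q, hH q]; module
  have hs2 : ∀ q, sff ψ q (T₂ q) (T₂ q) = H q - B q := fun q => by
    rw [hB q, hH q]; module
  have memB : ∀ q, B q ∈ Nor ψ q := fun q => by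
    rw [hB q]
    exact Submodule.smul_mem _ _ (Submodule.sub_mem _ (sff_mem ψ q _ _) (sff_mem ψ q _ _))
  have memH : ∀ q, H q ∈ Nor ψ q := fun q => by
    rw [hH q]
    exact Submodule.smul_mem _ _ (Submodule.add_mem _ (sff_mem ψ q _ _) (sff_mem ψ q _ _))
  have key : ∀ q, (⟪H q, J q (B q)⟫ : ℝ) ≠ 0 := by
    intro q hzero
    have hinfl : ∀ (b0 : Amb 4) (c₁ c₂ : ℝ), H q = c₁ • b0 → B q = c₂ • b0 → False := by
      intro b0 c₁ c₂ h1 h2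
      refine (hsem q).2 ⟨b0, ?_⟩
      rintro x ⟨v, hv1, rfl⟩
      obtain ⟨a₁, a₂, hv⟩ := hdec q v
      have hn : a₁*a₁ + a₂*a₂ = 1 := by
        have h := hgexp q a₁ a₂ a₁ a₂
        rw [hv] at h
        rw [← h, real_inner_self_eq_norm_mul_norm, hv1]; norm_num
      refine ⟨c₁ + (a₁*a₁ - a₂*a₂) * c₂, ?_⟩
      rw [← hv, hexp q a₁ a₂ a₁ a₂, hs1 q, hs2 q, h1, h2]
      match_scalars
      linear_combination c₁ * hn
    have hBne : B q ≠ 0 := by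
      intro h
      exact hinfl (H q) 1 0 (one_smul ℝ (H q)).symm (by rw [h, zero_smul])
    have hBB : (⟪B q, B q⟫ : ℝ) ≠ 0 := inner_self_ne_zero.mpr hBne
    have hJBne : J q (B q) ≠ 0 := by
      intro h
      apply hBne
      have h2 := hJiso q (B q) (memB q)
      rw [h, inner_zero_left] at h2
      exact inner_self_eq_zero.mp h2.symm
    have hJBB : (⟪J q (B q), B q⟫ : ℝ) = 0 := hJorth q (B q) (memB q)
    set c : ℝ := (⟪H q, B q⟫ : ℝ) / ⟪B q, B q⟫ with hc
    have hBu : (⟪B q, H q - c • B q⟫ : ℝ) = 0 := by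
      rw [inner_sub_right, real_inner_smul_right, real_inner_comm (H q) (B q), hc,
        div_mul_cancel₀ _ hBB, sub_self]
    have hJBH0 : (⟪J q (B q), H q⟫ : ℝ) = 0 := by rw [real_inner_comm]; exact hzero
    have hJBu : (⟪J q (B q), H q - c • B q⟫ : ℝ) = 0 := by
      rw [inner_sub_right, real_inner_smul_right, hJBB, hJBH0]
      ring
    by_cases hu0 : H q - c • B q = 0
    · exact hinfl (B q) c 1 (by rw [← sub_eq_zero]; exact hu0) (one_smul ℝ (B q)).symm
    · have h01 : (⟪B q, J q (B q)⟫ : ℝ) = 0 := by rw [real_inner_comm]; exact hJBB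
      have h20 : (⟪H q - c • B q, B q⟫ : ℝ) = 0 := by rw [real_inner_comm]; exact hBu
      have h21 : (⟪H q - c • B q, J q (B q)⟫ : ℝ) = 0 := by rw [real_inner_comm]; exact hJBu
      have li : LinearIndependent ℝ ![B q, J q (B q), H q - c • B q] := by
        apply linearIndependent_of_ne_zero_of_inner_eq_zero
        · intro i
          fin_cases i
          · exact hBne
          · exact hJBne
          · exact hu0
        · intro i j hij
          fin_cases i <;> fin_cases j <;>
            first
            | exact absurd rfl hij
            | exact h01
            | exact hBu
            | exact hJBB
            | exact hJBu
            | exact h20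
            | exact h21
      have hsub : Set.range ![B q, J q (B q), H q - c • B q] ⊆ (Nor ψ q : Set (Amb 4)) := by
        rintro x ⟨i, rfl⟩
        fin_cases i
        · exact memB q
        · exact hJmem q (B q) (memB q)
        · exact Submodule.sub_mem _ (memH q) (Submodule.smul_mem _ _ (memB q))
      have h3 : Module.finrank ℝ
          (Submodule.span ℝ (Set.range ![B q, J q (B q), H q - c • B q])) = 3 := by
        rw [finrank_span_eq_card li]; simp
      have hle := Submodule.finrank_mono (Submodule.span_le.mpr hsub)
      rw [h3, finrank_nor ψ q (hinj q)] at hle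
      omega
  refine ⟨key, ?_⟩
  intro q v w
  obtain ⟨a₁, a₂, hv⟩ := hdec q v
  obtain ⟨b₁, b₂, hw⟩ := hdec q w
  have hJBB : (⟪J q (B q), B q⟫ : ℝ) = 0 := hJorth q (B q) (memB q)
  have hJBH : (⟪J q (B q), H q⟫ : ℝ) = ⟪H q, J q (B q)⟫ := real_inner_comm (H q) (J q (B q))
  rw [← hv, ← hw, hexp q a₁ a₂ b₁ b₂, hgexp q a₁ a₂ b₁ b₂, hs1 q, hs2 q,
    real_inner_smul_left, inner_add_right, real_inner_smul_right, real_inner_smul_right,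
    inner_add_right, inner_sub_right, hJBB, hJBH, inv_mul_eq_div, div_eq_iff (key q)]
  ring
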